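/- Let X ∈ L_n be irreducible with rank s. Then X is a fixed point of T if and only if X = (n/s) ∑_{i=1}^s v(i)v(i)ᵀ for an orthonormal set {v(1),…,v(s)} satisfying (n/s) ∑_{i=1}^s v(i)_j² = 1 for every j = 1,…,n. -/

import Mathlib

open scoped RealInnerProductSpace Matrix

def elliptope (n : ℕ) : Set (Matrix (Fin n) (Fin n) ℝ) :=
  {X | X.PosSemidef ∧ ∀ i, X i i = 1}

def frob {n : ℕ} (A B : Matrix (Fin n) (Fin n) ℝ) : ℝ :=
  ∑ i, ∑ j, A i j * B i j

lemma inner_eu {n : ℕ} (x y : EuclideanSpace ℝ (Fin n)) : ⟪x, y⟫ = ∑ i, x i * y i := by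
  simp [PiLp.inner_apply, mul_comm]

open scoped MatrixOrder in
lemma psd_eq_ct_mul {n : ℕ} {Y : Matrix (Fin n) (Fin n) ℝ} (h : Y.PosSemidef) :
    ∃ B : Matrix (Fin n) (Fin n) ℝ, Y = Bᴴ * B :=
  CStarAlgebra.nonneg_iff_eq_star_mul_self.mp h.nonneg

lemma frob_rep {n s : ℕ} (X : Matrix (Fin n) (Fin n) ℝ) {d : ℝ}
    (v : Fin s → EuclideanSpace ℝ (Fin n))
    (hrep : ∀ j k, X j k = d * ∑ i, v i j * v i k)
    (Y : Matrix (Fin n) (Fin n) ℝ) :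
    frob X Y = d * ∑ i, ∑ j, ∑ k, v i j * v i k * Y j k := by
  unfold frob
  have step1 : ∀ j k : Fin n, X j k * Y j k = d * ∑ i, v i j * v i k * Y j k := by
    intro j k
    rw [hrep j k, mul_assoc, Finset.sum_mul]
  simp_rw [step1, ← Finset.mul_sum]
  congr 1
  exact (Finset.sum_congr rfl fun j _ => Finset.sum_comm).trans Finset.sum_comm

lemma frob_eq_trace {n : ℕ} (A B : Matrix (Fin n) (Fin n) ℝ) :
    frob A B = (A * Bᵀ).trace := by
  unfold frob
  simp [Matrix.trace, Matrix.diag, Matrix.mul_apply]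

lemma reverse_dir {n s : ℕ} (X : Matrix (Fin n) (Fin n) ℝ)
    (v : Fin s → EuclideanSpace ℝ (Fin n)) (hv : Orthonormal ℝ v)
    (hrep : ∀ j k, X j k = (n / s : ℝ) * ∑ i, v i j * v i k)
    (hone : ∀ j : Fin n, (n / s : ℝ) * ∑ i, (v i j) ^ 2 = 1) :
    ∀ Y ∈ elliptope n, frob X Y ≤ frob X X := by
  intro Y hY
  obtain ⟨hYpsd, hYdiag⟩ := hY
  set d : ℝ := (n / s : ℝ) with hd
  have hd0 : (0:ℝ) ≤ d := by positivity
  have hip : ∀ i i', ⟪v i, v i'⟫ = if i = i' then (1:ℝ) else 0 :=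
    fun i i' => orthonormal_iff_ite.mp hv i i'
  set W : Matrix (Fin s) (Fin n) ℝ := Matrix.of (fun i j => v i j) with hWdef
  have hXW : X = d • (Wᵀ * W) := by
    ext j k
    simp only [Matrix.smul_apply, Matrix.mul_apply, Matrix.transpose_apply, hWdef,
      Matrix.of_apply, smul_eq_mul]
    rw [hrep j k]
  have hWWT : W * Wᵀ = 1 := by
    ext i i'
    have h := hip i i'
    rw [inner_eu] at h
    simp only [Matrix.mul_apply, Matrix.transpose_apply, hWdef, Matrix.of_apply,
      Matrix.one_apply]
    exact h
  -- d * s = n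
  have hds : d * s = (n:ℝ) := by
    have h1 : ∑ j : Fin n, (d * ∑ i, (v i j)^2) = (n:ℝ) := by
      simp [hone]
    have h2 : ∑ j : Fin n, (d * ∑ i, (v i j)^2) = d * ∑ i : Fin s, ∑ j, (v i j)^2 := by
      rw [← Finset.mul_sum, Finset.sum_comm]
    have h3 : ∀ i : Fin s, ∑ j, (v i j)^2 = 1 := by
      intro i
      have h := hip i i
      rw [inner_eu, if_pos rfl] at h
      simpa [pow_two] using h
    rw [h2] at h1
    simp only [h3, Finset.sum_const, Finset.card_univ, Fintype.card_fin,
      nsmul_eq_mul, mul_one] at h1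
    rw [← h1]
  -- X symmetric
  have hXsymm : Xᵀ = X := by
    rw [hXW]
    ext j k
    simp only [Matrix.transpose_apply, Matrix.smul_apply, Matrix.mul_apply,
      Matrix.transpose_apply]
    exact congrArg _ (Finset.sum_congr rfl fun x _ => mul_comm _ _)
  -- frob X X = d * n
  have hfXX : frob X X = d * n := by
    rw [frob_eq_trace, hXsymm, hXW]
    rw [Matrix.smul_mul, Matrix.mul_smul, smul_smul]
    rw [Matrix.mul_assoc, ← Matrix.mul_assoc W Wᵀ W, hWWT, Matrix.one_mul]
    rw [Matrix.trace_smul, Matrix.trace_mul_comm, hWWT, Matrix.trace_one]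
    simp only [smul_eq_mul, Finset.card_univ, Fintype.card_fin]
    rw [show d * d * (s:ℝ) = d * (d * s) by ring, hds]
  -- frob X Y ≤ d * n
  obtain ⟨B, hB⟩ := psd_eq_ct_mul hYpsd
  have hYsymm : Yᵀ = Y := by
    ext j k
    have := congrFun (congrFun hYpsd.1 j) k
    simpa using this
  have hfXY : frob X Y = d * (W * Y * Wᵀ).trace := by
    rw [frob_eq_trace, hYsymm, hXW, Matrix.smul_mul, Matrix.trace_smul, smul_eq_mul]
    congr 1
    rw [Matrix.mul_assoc, Matrix.trace_mul_comm, Matrix.mul_assoc]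
  have hkey : (W * Y * Wᵀ).trace ≤ (n:ℝ) := by
    have hC : W * Y * Wᵀ = (B * Wᵀ)ᵀ * (B * Wᵀ) := by
      have hBt : Bᴴ = Bᵀ := by ext a b; simp [Matrix.conjTranspose_apply]
      rw [hB, hBt]
      rw [Matrix.transpose_mul, Matrix.transpose_transpose]
      simp only [Matrix.mul_assoc]
    rw [hC]
    set C := B * Wᵀ with hCdef
    have hCent : ∀ (r : Fin n) (i : Fin s), C r i = ⟪v i, (WithLp.toLp 2 (fun j => B r j) : EuclideanSpace ℝ (Fin n))⟫ := by
      intro r i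
      rw [inner_eu]
      simp [hCdef, Matrix.mul_apply, hWdef, mul_comm]
    have htr : (Cᵀ * C).trace = ∑ r : Fin n, ∑ i : Fin s, (C r i)^2 := by
      rw [Matrix.trace]
      simp only [Matrix.diag, Matrix.mul_apply, Matrix.transpose_apply]
      rw [Finset.sum_comm]
      simp [pow_two]
    rw [htr]
    have hbess : ∀ r : Fin n, ∑ i : Fin s, (C r i)^2 ≤ ∑ j, (B r j)^2 := by
      intro r
      set br : EuclideanSpace ℝ (Fin n) := WithLp.toLp 2 (fun j => B r j) with hbr
      have h1 : ∑ i : Fin s, ‖⟪v i, br⟫‖^2 ≤ ‖br‖^2 := hv.sum_inner_products_le br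
      have h2 : ∑ i : Fin s, (C r i)^2 = ∑ i : Fin s, ‖⟪v i, br⟫‖^2 := by
        refine Finset.sum_congr rfl fun i _ => ?_
        rw [hCent r i, Real.norm_eq_abs, sq_abs]
      have h3 : ‖br‖^2 = ∑ j, (B r j)^2 := by
        rw [← real_inner_self_eq_norm_sq, inner_eu]
        simp [pow_two, hbr]
      rw [h2, ← h3]
      exact h1
    calc ∑ r : Fin n, ∑ i : Fin s, (C r i)^2 ≤ ∑ r : Fin n, ∑ j, (B r j)^2 :=
          Finset.sum_le_sum fun r _ => hbess r
      _ = ∑ j : Fin n, Y j j := by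
          rw [Finset.sum_comm]
          refine Finset.sum_congr rfl fun j _ => ?_
          rw [hB]
          simp [Matrix.mul_apply, Matrix.conjTranspose_apply, pow_two]
      _ = (n:ℝ) := by simp [hYdiag]
  rw [hfXX, hfXY]
  exact mul_le_mul_of_nonneg_left hkey hd0

lemma eu_sum_apply {ι : Type*} {n : ℕ} (s : Finset ι) (f : ι → EuclideanSpace ℝ (Fin n))
    (p : Fin n) : (∑ i ∈ s, f i) p = ∑ i ∈ s, f i p :=
  map_sum (AddMonoidHom.mk' (fun (x : EuclideanSpace ℝ (Fin n)) => x p) (fun _ _ => rfl)) f s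

lemma norm_one_of_inner_one {n : ℕ} {x : EuclideanSpace ℝ (Fin n)} (h : ⟪x, x⟫ = 1) :
    ‖x‖ = 1 := by
  have h2 : ‖x‖ * ‖x‖ = 1 := by rw [← real_inner_self_eq_norm_mul_norm, h]
  rcases mul_self_eq_one_iff.mp h2 with h3 | h3
  · exact h3
  · nlinarith [norm_nonneg x]

lemma perturb {n : ℕ} (X : Matrix (Fin n) (Fin n) ℝ) (hXpsd : X.PosSemidef)
    (hdiag : ∀ i, X i i = 1)
    (hfix : ∀ Y ∈ elliptope n, frob X Y ≤ frob X X)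
    (u : Fin n → EuclideanSpace ℝ (Fin n))
    (hinner : ∀ j k, ⟪u j, u k⟫ = X j k)
    (j : Fin n) (w : EuclideanSpace ℝ (Fin n)) (hw : ‖w‖ = 1) :
    ⟪w, ∑ q ∈ Finset.univ.erase j, X j q • u q⟫ ≤
      ⟪u j, ∑ q ∈ Finset.univ.erase j, X j q • u q⟫ := by
  classical
  set c : EuclideanSpace ℝ (Fin n) := ∑ q ∈ Finset.univ.erase j, X j q • u q with hc
  set z : Fin n → EuclideanSpace ℝ (Fin n) := Function.update u j w with hz
  have hnu : ∀ p, ‖u p‖ = 1 := fun p => norm_one_of_inner_one (by rw [hinner]; exact hdiag p)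
  have hnz : ∀ p, ‖z p‖ = 1 := by
    intro p
    by_cases hp : p = j
    · subst hp; rw [hz, Function.update_self]; exact hw
    · rw [hz, Function.update_of_ne hp]; exact hnu p
  set Y : Matrix (Fin n) (Fin n) ℝ := Matrix.of (fun p q => ⟪z p, z q⟫) with hY
  have hYell : Y ∈ elliptope n := by
    constructor
    · set M : Matrix (Fin n) (Fin n) ℝ := Matrix.of (fun p q => z q p) with hM
      have : Y = Mᴴ * M := by
        ext p q
        simp only [hY, Matrix.of_apply, Matrix.mul_apply, Matrix.conjTranspose_apply, hM,
          RCLike.star_def, starRingEnd_apply, star_trivial]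
        rw [inner_eu]
      rw [this]
      exact Matrix.posSemidef_conjTranspose_mul_self M
    · intro p
      show ⟪z p, z p⟫ = 1
      rw [real_inner_self_eq_norm_mul_norm, hnz p, mul_one]
  have hfr := hfix Y hYell
  -- the difference identity
  set F : Fin n → Fin n → ℝ := fun p q => X p q * (⟪z p, z q⟫ - ⟪u p, u q⟫) with hF
  have hXsymm : ∀ p q, X p q = X q p := by
    intro p q
    have := congrFun (congrFun hXpsd.1 p) q
    simpa using this.symm
  have hFout : ∀ p, p ≠ j → ∀ q, q ≠ j → F p q = 0 := by
    intro p hp q hq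
    simp only [hF, hz, Function.update_of_ne hp, Function.update_of_ne hq, sub_self, mul_zero]
  have hrow : ∀ p, p ≠ j → F p j = X j p * (⟪w, u p⟫ - ⟪u j, u p⟫) := by
    intro p hp
    simp only [hF, hz, Function.update_of_ne hp, Function.update_self]
    rw [hXsymm p j, real_inner_comm (u p) w, real_inner_comm (u p) (u j)]
  have hinner_c : ∀ x : EuclideanSpace ℝ (Fin n),
      ⟪x, c⟫ = ∑ q ∈ Finset.univ.erase j, X j q * ⟪x, u q⟫ := by
    intro x
    rw [hc, inner_sum]
    exact Finset.sum_congr rfl fun q _ => real_inner_smul_right x (u q) (X j q)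
  have hFjj : F j j = 0 := by
    simp only [hF, hz, Function.update_self]
    rw [real_inner_self_eq_norm_mul_norm, real_inner_self_eq_norm_mul_norm, hw, hnu j]
    simp
  have hrowj : ∑ q, F j q = ⟪w, c⟫ - ⟪u j, c⟫ := by
    rw [← Finset.add_sum_erase _ _ (Finset.mem_univ j), hFjj, zero_add]
    rw [hinner_c w, hinner_c (u j), ← Finset.sum_sub_distrib]
    refine Finset.sum_congr rfl fun q hq => ?_
    have hq' : q ≠ j := Finset.ne_of_mem_erase hq
    simp only [hF, hz, Function.update_of_ne hq', Function.update_self]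
    ring
  have hcolj : ∑ p ∈ Finset.univ.erase j, F p j = ⟪w, c⟫ - ⟪u j, c⟫ := by
    rw [hinner_c w, hinner_c (u j), ← Finset.sum_sub_distrib]
    refine Finset.sum_congr rfl fun p hp => ?_
    have hp' : p ≠ j := Finset.ne_of_mem_erase hp
    rw [hrow p hp']
    ring
  have hdiff : frob X Y - frob X X = 2 * (⟪w, c⟫ - ⟪u j, c⟫) := by
    have e1 : frob X Y - frob X X = ∑ p, ∑ q, F p q := by
      unfold frob
      rw [← Finset.sum_sub_distrib]
      refine Finset.sum_congr rfl fun p _ => ?_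
      rw [← Finset.sum_sub_distrib]
      refine Finset.sum_congr rfl fun q _ => ?_
      simp only [hF, hY, Matrix.of_apply]
      rw [← hinner p q]
      ring
    rw [e1, ← Finset.add_sum_erase _ _ (Finset.mem_univ j), hrowj]
    have e2 : ∑ p ∈ Finset.univ.erase j, ∑ q, F p q
        = ∑ p ∈ Finset.univ.erase j, F p j := by
      refine Finset.sum_congr rfl fun p hp => ?_
      have hp' : p ≠ j := Finset.ne_of_mem_erase hp
      rw [← Finset.add_sum_erase _ _ (Finset.mem_univ j)]
      rw [Finset.sum_eq_zero fun q hq => hFout p hp' q (Finset.ne_of_mem_erase hq), add_zero]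
    rw [e2, hcolj]
    ring
  linarith

section Forward
variable {n : ℕ} (X : Matrix (Fin n) (Fin n) ℝ)

lemma trace_eq_sum_eig (h : X.IsHermitian) :
    X.trace = ∑ i, h.eigenvalues i := by
  conv_lhs => rw [h.spectral_theorem, Unitary.conjStarAlgAut_apply]
  rw [Matrix.trace_mul_cycle]
  rw [show (star (Matrix.IsHermitian.eigenvectorUnitary h : Matrix (Fin n) (Fin n) ℝ)) *
    (Matrix.IsHermitian.eigenvectorUnitary h : Matrix (Fin n) (Fin n) ℝ) = 1 from
    Unitary.coe_star_mul_self _, Matrix.one_mul, Matrix.trace_diagonal]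
  simp

lemma eigcond (hXpsd : X.PosSemidef) (hdiag : ∀ i, X i i = 1)
    (hfix : ∀ Y ∈ elliptope n, frob X Y ≤ frob X X) :
    ∃ D : Fin n → ℝ, (∀ j, 1 ≤ D j) ∧ (∀ k j, (X * X) k j = D j * X k j) := by
  classical
  obtain ⟨A, hA⟩ := psd_eq_ct_mul hXpsd
  set u : Fin n → EuclideanSpace ℝ (Fin n) := fun q => WithLp.toLp 2 (fun p => A p q) with hu
  have hinner : ∀ j k, ⟪u j, u k⟫ = X j k := by
    intro j k
    rw [inner_eu, hA]
    simp [Matrix.mul_apply, Matrix.conjTranspose_apply, hu]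
  set cv : Fin n → EuclideanSpace ℝ (Fin n) :=
    fun j => ∑ q ∈ Finset.univ.erase j, X j q • u q with hcv
  refine ⟨fun j => 1 + ‖cv j‖, fun j => by simp [norm_nonneg], ?_⟩
  have hc_eq : ∀ j, cv j = ‖cv j‖ • u j := by
    intro j
    by_cases h0 : cv j = 0
    · rw [h0, norm_zero, zero_smul]
    · have hnu : ‖u j‖ = 1 := norm_one_of_inner_one (by rw [hinner]; exact hdiag j)
      have hw : ‖(‖cv j‖⁻¹ • cv j : EuclideanSpace ℝ (Fin n))‖ = 1 := by
        rw [norm_smul, norm_inv, norm_norm, inv_mul_cancel₀ (norm_ne_zero_iff.mpr h0)]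
      have hkey := perturb X hXpsd hdiag hfix u hinner j _ hw
      have h1 : ⟪(‖cv j‖⁻¹ • cv j : EuclideanSpace ℝ (Fin n)), cv j⟫ = ‖cv j‖ := by
        rw [real_inner_smul_left, real_inner_self_eq_norm_mul_norm]
        field_simp
      have h2 : ⟪u j, cv j⟫ ≤ ‖u j‖ * ‖cv j‖ := real_inner_le_norm _ _
      have h3 : ⟪u j, cv j⟫ = ‖u j‖ * ‖cv j‖ := by
        rw [hnu, one_mul]
        rw [hnu, one_mul] at h2
        rw [h1] at hkey
        linarith
      have h4 := inner_eq_norm_mul_iff_real.mp h3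
      rw [hnu, one_smul] at h4
      exact h4.symm
  have heig : ∀ j, ∑ q, X j q • u q = (1 + ‖cv j‖) • u j := by
    intro j
    rw [← Finset.add_sum_erase _ _ (Finset.mem_univ j), hdiag j, one_smul]
    rw [show (∑ q ∈ Finset.univ.erase j, X j q • u q) = cv j from rfl]
    rw [add_smul, one_smul]
    exact congrArg (fun t => u j + t) (hc_eq j)
  have hAX : ∀ p j, ∑ q, X j q * A p q = (1 + ‖cv j‖) * A p j := by
    intro p j
    have h : (∑ q, X j q • u q) p = ((1 + ‖cv j‖) • u j) p := congrFun (congrArg WithLp.ofLp (heig j)) p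
    rw [eu_sum_apply] at h
    simpa [hu, PiLp.smul_apply] using h
  have hXs : ∀ p q, X p q = X q p := by
    intro p q
    have := congrFun (congrFun hXpsd.1 p) q
    simpa using this.symm
  have hXent : ∀ k j, X k j = ∑ p, A p k * A p j := by
    intro k j
    rw [hA]
    simp [Matrix.mul_apply, Matrix.conjTranspose_apply]
  intro k j
  calc (X * X) k j = ∑ q, X k q * X q j := Matrix.mul_apply
    _ = ∑ q, (∑ p, A p k * A p q) * X j q := by
        refine Finset.sum_congr rfl fun q _ => ?_
        rw [← hXent k q, hXs q j]
    _ = ∑ p, A p k * (∑ q, X j q * A p q) := by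
        simp_rw [Finset.sum_mul, Finset.mul_sum]
        rw [Finset.sum_comm]
        exact Finset.sum_congr rfl fun p _ => Finset.sum_congr rfl fun q _ => by ring
    _ = ∑ p, A p k * ((1 + ‖cv j‖) * A p j) := by
        refine Finset.sum_congr rfl fun p _ => ?_
        rw [hAX p j]
    _ = (1 + ‖cv j‖) * ∑ p, A p k * A p j := by
        rw [Finset.mul_sum]
        exact Finset.sum_congr rfl fun p _ => by ring
    _ = (1 + ‖cv j‖) * X k j := by rw [← hXent k j]

end Forward

lemma forward_dir {n s : ℕ} (X : Matrix (Fin n) (Fin n) ℝ) (hX : X ∈ elliptope n)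
    (hirr : ∀ A : Set (Fin n), (∀ i ∈ A, ∀ j ∉ A, X i j = 0) → A = ∅ ∨ A = Set.univ)
    (hrank : X.rank = s)
    (hfix : ∀ Y ∈ elliptope n, frob X Y ≤ frob X X) :
    ∃ v : Fin s → EuclideanSpace ℝ (Fin n), Orthonormal ℝ v ∧
      (∀ j k : Fin n, X j k = (n / s : ℝ) * ∑ i, v i j * v i k) ∧
      (∀ j : Fin n, (n / s : ℝ) * ∑ i, (v i j) ^ 2 = 1) := by
  classical
  obtain ⟨hXpsd, hdiag⟩ := hX
  rcases Nat.eq_zero_or_pos n with hn | hn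
  · -- degenerate case n = 0
    haveI : IsEmpty (Fin n) := ⟨fun j => absurd j.isLt (by omega)⟩
    have hs : s = 0 := by
      rw [← hrank]
      have h1 : X.rank ≤ Fintype.card (Fin n) := X.rank_le_card_width
      simpa [hn] using h1
    haveI : IsEmpty (Fin s) := ⟨fun i => absurd i.isLt (by omega)⟩
    exact ⟨fun _ => 0, ⟨fun i => isEmptyElim i, fun i => isEmptyElim i⟩,
      fun j _ => isEmptyElim j, fun j => isEmptyElim j⟩
  · obtain ⟨D, hD1, hXXe⟩ := eigcond X hXpsd hdiag hfix
    have hXs : ∀ p q, X p q = X q p := by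
      intro p q
      have := congrFun (congrFun hXpsd.1 p) q
      simpa using this.symm
    set j0 : Fin n := ⟨0, hn⟩ with hj0
    -- D is constant by irreducibility
    have hDconst : ∀ k, D k = D j0 := by
      have hcond : ∀ i ∈ {k | D k = D j0}, ∀ j ∉ {k | D k = D j0}, X i j = 0 := by
        intro i hi j hj
        by_contra hne
        have hij : (X * X) i j = (X * X) j i := by
          rw [Matrix.mul_apply, Matrix.mul_apply]
          refine Finset.sum_congr rfl fun q _ => ?_
          rw [hXs i q, hXs q j]; ring
        have h1 : (X * X) i j = D j * X i j := hXXe i j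
        have h2 : (X * X) j i = D i * X j i := hXXe j i
        have : D j * X i j = D i * X i j := by
          rw [← h1, hij, h2, hXs j i]
        have hDij : D j = D i := mul_right_cancel₀ hne this
        exact hj (by rw [Set.mem_setOf_eq, hDij]; exact hi)
      rcases hirr _ hcond with h | h
      · exfalso
        have hmem : j0 ∈ ({k | D k = D j0} : Set (Fin n)) := rfl
        rw [h] at hmem
        exact hmem
      · intro k
        have hk : k ∈ ({k | D k = D j0} : Set (Fin n)) := by
          rw [h]; exact Set.mem_univ k
        exact hk
    set d : ℝ := D j0 with hd
    have hd1 : 1 ≤ d := hD1 j0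
    have hd0 : d ≠ 0 := by linarith
    have hXXd : ∀ k j, (X * X) k j = d * X k j := by
      intro k j
      rw [hXXe k j, hDconst j]
    set hH : X.IsHermitian := hXpsd.1 with hHdef
    set lam : Fin n → ℝ := hH.eigenvalues with hlam
    set w := hH.eigenvectorBasis with hw
    have heigval : ∀ i, lam i = 0 ∨ lam i = d := by
      intro i
      have h1 := hH.mulVec_eigenvectorBasis i
      have h2 : (X * X) *ᵥ ⇑(w i) = (lam i * lam i) • ⇑(w i) := by
        rw [← Matrix.mulVec_mulVec, h1, Matrix.mulVec_smul, h1, smul_smul]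
      have hXXm : X * X = d • X := by
        ext k j; rw [hXXd k j]; simp
      rw [hXXm, Matrix.smul_mulVec, h1, smul_smul] at h2
      have h3 : (lam i * lam i - d * lam i) • ⇑(w i) = 0 := by
        rw [sub_smul, h2, sub_self]
      rcases smul_eq_zero.mp h3 with h | h
      · rcases mul_eq_zero.mp (by nlinarith [h] : lam i * (lam i - d) = 0) with h' | h'
        · exact Or.inl h'
        · exact Or.inr (by linarith)
      · exfalso
        have hb1 : ‖w i‖ = 1 := w.orthonormal.1 i
        have : (w i : EuclideanSpace ℝ (Fin n)) = 0 := WithLp.ofLp_injective 2 (by simpa using h)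
        rw [this, norm_zero] at hb1
        norm_num at hb1
    have htr : ∑ i, lam i = (n : ℝ) := by
      have h1 := trace_eq_sum_eig X hH
      have h2 : X.trace = (n : ℝ) := by
        rw [Matrix.trace]
        simp [Matrix.diag, hdiag]
      rw [← h1, h2]
    have hcard : Fintype.card {i // lam i ≠ 0} = s := by
      rw [← hrank, hH.rank_eq_card_non_zero_eigs]
    have hsd : (s : ℝ) * d = (n : ℝ) := by
      have e1 : ∑ i ∈ Finset.univ.filter (fun i => lam i ≠ 0), lam i = ∑ i, lam i :=
        Finset.sum_filter_of_ne (fun x _ h => h)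
      have e2 : ∑ i ∈ Finset.univ.filter (fun i => lam i ≠ 0), lam i
          = ∑ _i ∈ Finset.univ.filter (fun i => lam i ≠ 0), d :=
        Finset.sum_congr rfl (fun i hi => by
          rcases heigval i with h | h
          · exact absurd h (Finset.mem_filter.mp hi).2
          · exact h)
      have e4 : (Finset.univ.filter (fun i => lam i ≠ 0)).card = s := by
        rw [← hcard, Fintype.card_subtype]
      rw [← htr, ← e1, e2, Finset.sum_const, nsmul_eq_mul, e4]
    have hs0 : (s : ℝ) ≠ 0 := by
      intro h
      rw [h, zero_mul] at hsd
      have : 0 < (n : ℝ) := by exact_mod_cast hn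
      linarith
    have hd_eq : d = (n : ℝ) / (s : ℝ) := by
      rw [eq_div_iff hs0]
      linarith [hsd]
    -- entrywise spectral decomposition
    have hentry : ∀ j k, X j k = ∑ i, lam i * (w i j * w i k) := by
      intro j k
      conv_lhs => rw [hH.spectral_theorem, Unitary.conjStarAlgAut_apply]
      rw [Matrix.mul_apply]
      refine Finset.sum_congr rfl fun b _ => ?_
      rw [Matrix.mul_diagonal, Matrix.star_apply]
      simp only [Matrix.IsHermitian.eigenvectorUnitary_apply, Function.comp_apply,
        star_trivial]
      norm_num
      ring
    set e : Fin s ≃ {i // lam i ≠ 0} := (Fintype.equivFinOfCardEq hcard).symm with he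
    refine ⟨fun i => w ((e i) : Fin n), ?_, ?_, ?_⟩
    · exact w.orthonormal.comp _ (Subtype.val_injective.comp e.injective)
    · intro j k
      rw [hentry j k, ← hd_eq]
      have step1 : ∑ i, lam i * (w i j * w i k)
          = ∑ i ∈ Finset.univ.filter (fun i => lam i ≠ 0), lam i * (w i j * w i k) :=
        (Finset.sum_filter_of_ne (fun x _ h => left_ne_zero_of_mul h)).symm
      have step2 : ∑ i ∈ Finset.univ.filter (fun i => lam i ≠ 0), lam i * (w i j * w i k)
          = ∑ i ∈ Finset.univ.filter (fun i => lam i ≠ 0), d * (w i j * w i k) := by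
        refine Finset.sum_congr rfl fun i hi => ?_
        rcases heigval i with h | h
        · exact absurd h (Finset.mem_filter.mp hi).2
        · rw [h]
      have step3 : ∑ i ∈ Finset.univ.filter (fun i => lam i ≠ 0), d * (w i j * w i k)
          = ∑ a : {i // lam i ≠ 0}, d * (w (a : Fin n) j * w (a : Fin n) k) :=
        Finset.sum_subtype _ (by simp) _
      have step4 : ∑ a : {i // lam i ≠ 0}, d * (w (a : Fin n) j * w (a : Fin n) k)
          = ∑ i : Fin s, d * (w ((e i) : Fin n) j * w ((e i) : Fin n) k) :=
        (Equiv.sum_comp e _).symm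
      rw [step1, step2, step3, step4, Finset.mul_sum]
    · intro j
      have h := hentry j j
      rw [hdiag j] at h
      have step1 : ∑ i, lam i * (w i j * w i j)
          = ∑ i ∈ Finset.univ.filter (fun i => lam i ≠ 0), lam i * (w i j * w i j) :=
        (Finset.sum_filter_of_ne (fun x _ h => left_ne_zero_of_mul h)).symm
      have step2 : ∑ i ∈ Finset.univ.filter (fun i => lam i ≠ 0), lam i * (w i j * w i j)
          = ∑ i ∈ Finset.univ.filter (fun i => lam i ≠ 0), d * (w i j * w i j) := by
        refine Finset.sum_congr rfl fun i hi => ?_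
        rcases heigval i with h' | h'
        · exact absurd h' (Finset.mem_filter.mp hi).2
        · rw [h']
      have step3 : ∑ i ∈ Finset.univ.filter (fun i => lam i ≠ 0), d * (w i j * w i j)
          = ∑ a : {i // lam i ≠ 0}, d * (w (a : Fin n) j * w (a : Fin n) j) :=
        Finset.sum_subtype _ (by simp) _
      have step4 : ∑ a : {i // lam i ≠ 0}, d * (w (a : Fin n) j * w (a : Fin n) j)
          = ∑ i : Fin s, d * (w ((e i) : Fin n) j * w ((e i) : Fin n) j) :=
        (Equiv.sum_comp e _).symm
      rw [step1, step2, step3, step4] at h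
      calc (n / s : ℝ) * ∑ i : Fin s, ((fun i => w ((e i) : Fin n)) i j) ^ 2
          = ∑ i : Fin s, d * (w ((e i) : Fin n) j * w ((e i) : Fin n) j) := by
            rw [← hd_eq, Finset.mul_sum]
            exact Finset.sum_congr rfl fun i _ => by ring
        _ = 1 := h.symm

theorem stmt13 {n s : ℕ} (X : Matrix (Fin n) (Fin n) ℝ) (hX : X ∈ elliptope n)
    (hirr : ∀ A : Set (Fin n), (∀ i ∈ A, ∀ j ∉ A, X i j = 0) → A = ∅ ∨ A = Set.univ)
    (hrank : X.rank = s) :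
    (∀ Y ∈ elliptope n, frob X Y ≤ frob X X) ↔
      ∃ v : Fin s → EuclideanSpace ℝ (Fin n), Orthonormal ℝ v ∧
        (∀ j k : Fin n, X j k = (n / s : ℝ) * ∑ i, v i j * v i k) ∧
        (∀ j : Fin n, (n / s : ℝ) * ∑ i, (v i j) ^ 2 = 1) := by
  constructor
  · intro hfix
    exact forward_dir X hX hirr hrank hfix
  · rintro ⟨v, hv, hrep, hone⟩
    exact reverse_dir X v hv hrep hone
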